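/- Let G and H be finite groups with coprime orders. Then μ(G × H) = μ(G) + μ(H). -/

import Mathlib

noncomputable def minFaithfulDegree (G : Type*) [Group G] : ℕ :=
  sInf {n : ℕ | ∃ f : G →* Equiv.Perm (Fin n), Function.Injective f}

namespace MuProdAux

open Equiv Function

variable {G K L α : Type*} [Group G] [Group K] [Group L]

/-- `Equiv.permCongr` as a `MonoidHom`. -/
def permCongrHom {β : Type*} (e : α ≃ β) : Equiv.Perm α →* Equiv.Perm β where
  toFun p := (e.symm.trans p).trans e
  map_one' := by ext x; simp
  map_mul' p q := by ext x; simp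

lemma permCongrHom_injective {β : Type*} (e : α ≃ β) :
    Function.Injective (permCongrHom e) := by
  intro p q h
  ext x
  have := congrArg (fun π : Equiv.Perm β => e.symm (π (e x))) h
  simpa [permCongrHom] using this

lemma mu_le_natCard [Finite α] (f : G →* Equiv.Perm α) (hf : Function.Injective f) :
    minFaithfulDegree G ≤ Nat.card α := by
  apply Nat.sInf_le
  exact ⟨(permCongrHom (Finite.equivFin α)).comp f, (permCongrHom_injective _).comp hf⟩

lemma exists_embed (G : Type*) [Group G] [Finite G] :
    {n : ℕ | ∃ f : G →* Equiv.Perm (Fin n), Function.Injective f}.Nonempty := by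
  refine ⟨Nat.card G, (permCongrHom (Finite.equivFin G)).comp (MulAction.toPermHom G G), ?_⟩
  refine (permCongrHom_injective _).comp ?_
  intro a b hab
  have := congrArg (fun π : Equiv.Perm G => π 1) hab
  simpa using this

lemma mu_le_card_support [Finite α] (f : G →* Equiv.Perm α) (hf : Function.Injective f) :
    minFaithfulDegree G ≤ Nat.card {x : α // ∃ g, f g x ≠ x} := by
  classical
  set S : α → Prop := fun x => ∃ g, f g x ≠ x with hS
  have hnot : ∀ x, ¬ S x → ∀ g, f g x = x := by
    intro x hx g
    by_contra hg
    exact hx ⟨g, hg⟩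
  have himp : ∀ (g : G) (x : α), S x → S (f g x) := by
    intro g x hx
    by_contra hgx
    have hfix := hnot _ hgx
    have h1 : ∀ k : G, f k x = f g x := by
      intro k
      have h2 : f (k * g⁻¹) (f g x) = f g x := hfix _
      calc f k x = f (k * g⁻¹ * g) x := by group
        _ = f (k * g⁻¹) (f g x) := by rw [map_mul, Equiv.Perm.mul_apply]
        _ = f g x := h2
    have hx1 : x = f g x := by simpa using h1 1
    obtain ⟨k, hk⟩ := hx
    exact hk ((h1 k).trans hx1.symm)
  have hinv : ∀ (g : G) (x : α), S x ↔ S (f g x) := by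
    intro g x
    constructor
    · exact himp g x
    · intro hgx
      have := himp g⁻¹ _ hgx
      simpa [← Equiv.Perm.mul_apply, ← map_mul] using this
  let F : G →* Equiv.Perm {x : α // S x} :=
    { toFun := fun g => Equiv.Perm.subtypePerm (f g) (fun x => (hinv g x).symm)
      map_one' := by
        ext x
        simp [Equiv.Perm.subtypePerm_apply]
      map_mul' := by
        intro g h
        ext x
        simp [Equiv.Perm.subtypePerm_apply, map_mul]
        rfl }
  have hFinj : Function.Injective F := by
    rw [injective_iff_map_eq_one]
    intro g hg
    have hfg : f g = 1 := by
      ext x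
      by_cases hx : S x
      · have := congrArg (fun π : Equiv.Perm {x : α // S x} => (π ⟨x, hx⟩ : α)) hg
        simpa [F, Equiv.Perm.subtypePerm_apply] using this
      · simpa using hnot x hx g
    have h2 : f g = f 1 := by simpa using hfg
    exact hf h2
  exact mu_le_natCard F hFinj

/-! ### Orbit setoids -/

/-- Orbit setoid of a hom into a permutation group. -/
def orbS (u : K →* Equiv.Perm α) : Setoid α where
  r x y := ∃ k, u k x = y
  iseqv := by
    refine ⟨fun x => ⟨1, by simp⟩, ?_, ?_⟩
    · rintro x y ⟨k, rfl⟩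
      exact ⟨k⁻¹, by rw [← Equiv.Perm.mul_apply, ← map_mul, inv_mul_cancel, map_one,
        Equiv.Perm.one_apply]⟩
    · rintro x y z ⟨k, rfl⟩ ⟨l, rfl⟩
      exact ⟨l * k, by rw [map_mul, Equiv.Perm.mul_apply]⟩

def cls {M : Type*} [Group M] (w : M →* Equiv.Perm α) (x : α) : Quotient (orbS w) :=
  Quotient.mk _ x

section Two

variable (u : K →* Equiv.Perm α) (v : L →* Equiv.Perm α)
  (hc : ∀ k l, u k * v l = v l * u k)

include hc

lemma swap_apply (k : K) (l : L) (x : α) : u k (v l x) = v l (u k x) := by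
  have := congrArg (fun π : Equiv.Perm α => π x) (hc k l)
  simpa using this

/-- The "joint orbit" setoid of two commuting permutation representations. -/
def jointS : Setoid α where
  r x y := ∃ k l, u k (v l x) = y
  iseqv := by
    have cancelu : ∀ (m : K) (x : α), u m⁻¹ (u m x) = x := by
      intro m x
      rw [← Equiv.Perm.mul_apply, ← map_mul, inv_mul_cancel, map_one, Equiv.Perm.one_apply]
    have cancelv : ∀ (m : L) (x : α), v m⁻¹ (v m x) = x := by
      intro m x
      rw [← Equiv.Perm.mul_apply, ← map_mul, inv_mul_cancel, map_one, Equiv.Perm.one_apply]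
    refine ⟨fun x => ⟨1, 1, by simp⟩, ?_, ?_⟩
    · rintro x y ⟨k, l, rfl⟩
      refine ⟨k⁻¹, l⁻¹, ?_⟩
      rw [← swap_apply u v hc k l⁻¹ (v l x), cancelv l x, cancelu k x]
    · rintro x y z ⟨k, l, rfl⟩ ⟨k', l', rfl⟩
      refine ⟨k' * k, l' * l, ?_⟩
      rw [map_mul, map_mul, Equiv.Perm.mul_apply, Equiv.Perm.mul_apply]
      rw [swap_apply u v hc k l', swap_apply u v hc k l]

lemma orbS_le_jointS_left {x y : α} (h : (orbS u).r x y) : (jointS u v hc).r x y := by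
  obtain ⟨k, rfl⟩ := h
  exact ⟨k, 1, by simp⟩

lemma orbS_le_jointS_right {x y : α} (h : (orbS v).r x y) : (jointS u v hc).r x y := by
  obtain ⟨l, rfl⟩ := h
  exact ⟨1, l, by simp⟩

/-- The action of `K` on the `v`-orbit classes. -/
def permQuot : K →* Equiv.Perm (Quotient (orbS v)) where
  toFun k :=
    { toFun := Quotient.map' (u k) (by
        rintro x y ⟨l, rfl⟩
        exact ⟨l, (swap_apply u v hc k l x).symm⟩)
      invFun := Quotient.map' (u k⁻¹) (by
        rintro x y ⟨l, rfl⟩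
        exact ⟨l, (swap_apply u v hc k⁻¹ l x).symm⟩)
      left_inv := fun q => Quotient.inductionOn' q (fun x => by
        simp only [Quotient.map'_mk'']
        rw [← Equiv.Perm.mul_apply, ← map_mul, inv_mul_cancel, map_one, Equiv.Perm.one_apply])
      right_inv := fun q => Quotient.inductionOn' q (fun x => by
        simp only [Quotient.map'_mk'']
        rw [← Equiv.Perm.mul_apply, ← map_mul, mul_inv_cancel, map_one, Equiv.Perm.one_apply]) }
  map_one' := Equiv.ext fun q => Quotient.inductionOn' q fun x => by
    simp only [Equiv.coe_fn_mk, Quotient.map'_mk'', map_one, Equiv.Perm.one_apply]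
  map_mul' k k' := Equiv.ext fun q => Quotient.inductionOn' q fun x => by
    simp only [Equiv.coe_fn_mk, Equiv.Perm.mul_apply, Quotient.map'_mk'', map_mul]

lemma permQuot_apply_mk (k : K) (x : α) :
    permQuot u v hc k (cls v x) = cls v (u k x) :=
  rfl

/-- Key coprimality lemma: if `u k (v l x) = x` then `u k x = x`. -/
lemma fix_key [Finite K] [Finite L]
    (hcop : Nat.Coprime (Nat.card K) (Nat.card L)) {k : K} {l : L} {x : α}
    (hx : u k (v l x) = x) : u k x = x := by
  set m := Nat.card L with hm
  set w : Equiv.Perm α := u k * v l with hw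
  have hwx : w x = x := by simpa [hw, Equiv.Perm.mul_apply] using hx
  have hwp : ∀ j : ℕ, (w ^ j) x = x := by
    intro j
    induction j with
    | zero => simp
    | succ j ih => rw [pow_succ, Equiv.Perm.mul_apply, hwx, ih]
  have hcomm : Commute (u k) (v l) := hc k l
  have hwj : ∀ j : ℕ, w ^ (m * j) = u (k ^ (m * j)) := by
    intro j
    have hl : l ^ (m * j) = 1 := by rw [pow_mul, pow_card_eq_one', one_pow]
    rw [hw, hcomm.mul_pow, ← map_pow, ← map_pow, hl, map_one, mul_one]
  rcases eq_or_ne k 1 with rfl | hk1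
  · simp
  · set d := orderOf k with hd
    have h0 : 0 < d := orderOf_pos k
    have hne : d ≠ 1 := fun h => hk1 (orderOf_eq_one_iff.mp h)
    have hd1 : 1 < d := by omega
    have hdvd : d ∣ Nat.card K := orderOf_dvd_natCard k
    have hcd : Nat.Coprime m d := (Nat.Coprime.coprime_dvd_left hdvd hcop).symm
    obtain ⟨t, -, ht⟩ := Nat.exists_mul_mod_eq_one_of_coprime hcd hd1
    have hkt : k ^ (m * t) = k := by
      rw [← pow_mod_orderOf, ← hd, ht, pow_one]
    calc u k x = u (k ^ (m * t)) x := by rw [hkt]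
      _ = (w ^ (m * t)) x := by rw [hwj t]
      _ = x := hwp _

lemma permQuot_injective [Finite K] [Finite L]
    (hcop : Nat.Coprime (Nat.card K) (Nat.card L))
    (hu : Function.Injective u) :
    Function.Injective (permQuot u v hc) := by
  rw [injective_iff_map_eq_one]
  intro k hk
  have hfix : ∀ x : α, u k x = x := by
    intro x
    have h1 : cls v (u k x) = cls v x := by
      have := congrArg (fun π : Equiv.Perm (Quotient (orbS v)) => π (cls v x)) hk
      simpa [permQuot_apply_mk] using this
    obtain ⟨l, hl⟩ : (orbS v).r (u k x) x := Quotient.exact h1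
    have h3 : u k (v l (u k x)) = u k x := by rw [hl]
    have h4 := fix_key u v hc hcop h3
    exact (u k).injective h4
  have h5 : u k = u 1 := by
    refine Equiv.ext fun x => ?_
    rw [map_one, Equiv.Perm.one_apply, hfix x]
  exact hu h5

/-! ### The combinatorial construction -/

lemma grid {x y : α} (h : (jointS u v hc).r x y) :
    ∃ w : α, cls v w = cls v x ∧ cls u w = cls u y := by
  obtain ⟨k, l, rfl⟩ := h
  exact ⟨v l x, (Quotient.sound (⟨l, rfl⟩ : (orbS v).r x (v l x))).symm,
    Quotient.sound (⟨k, rfl⟩ : (orbS u).r (v l x) (u k (v l x)))⟩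

noncomputable def base (x : α) : α := (Quotient.mk (jointS u v hc) x).out

lemma base_rel (x : α) : (jointS u v hc).r (base u v hc x) x := Quotient.mk_out x

lemma base_eq {x y : α} (h : (jointS u v hc).r x y) : base u v hc x = base u v hc y :=
  congrArg Quotient.out (Quotient.sound h)

def hasOC (r : α) : Prop := ∃ z, (jointS u v hc).r r z ∧ cls u z ≠ cls u r

def hasOR (r : α) : Prop := ∃ z, (jointS u v hc).r r z ∧ cls v z ≠ cls v r

open Classical in
noncomputable def ocPt (r : α) : α := if h : hasOC u v hc r then h.choose else r

open Classical in
noncomputable def orPt (r : α) : α := if h : hasOR u v hc r then h.choose else r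

lemma ocPt_rel (r : α) : (jointS u v hc).r r (ocPt u v hc r) := by
  unfold ocPt
  split_ifs with h
  · exact h.choose_spec.1
  · exact (jointS u v hc).iseqv.refl r

lemma ocPt_col {r : α} (h : hasOC u v hc r) : cls u (ocPt u v hc r) ≠ cls u r := by
  unfold ocPt
  rw [dif_pos h]
  exact h.choose_spec.2

lemma orPt_rel (r : α) : (jointS u v hc).r r (orPt u v hc r) := by
  unfold orPt
  split_ifs with h
  · exact h.choose_spec.1
  · exact (jointS u v hc).iseqv.refl r

lemma orPt_row {r : α} (h : hasOR u v hc r) : cls v (orPt u v hc r) ≠ cls v r := by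
  unfold orPt
  rw [dif_pos h]
  exact h.choose_spec.2

open Classical in
noncomputable def Lmap (c : Quotient (orbS v)) : α :=
  if _h : cls v (base u v hc c.out) = c ∧ hasOC u v hc (base u v hc c.out) then
    (grid u v hc (ocPt_rel u v hc (base u v hc c.out))).choose
  else
    (grid u v hc ((jointS u v hc).iseqv.symm (base_rel u v hc c.out))).choose

open Classical in
noncomputable def Rmap (d : Quotient (orbS u)) : α :=
  if _h : d = cls u (ocPt u v hc (base u v hc d.out)) ∧ hasOR u v hc (base u v hc d.out) then
    (grid u v hc ((jointS u v hc).iseqv.trans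
      ((jointS u v hc).iseqv.symm (orPt_rel u v hc (base u v hc d.out)))
      (ocPt_rel u v hc (base u v hc d.out)))).choose
  else
    (grid u v hc (base_rel u v hc d.out)).choose

lemma Lmap_row (c : Quotient (orbS v)) : cls v (Lmap u v hc c) = c := by
  unfold Lmap
  split_ifs with h
  · exact (grid u v hc (ocPt_rel u v hc (base u v hc c.out))).choose_spec.1.trans h.1
  · exact ((grid u v hc ((jointS u v hc).iseqv.symm
      (base_rel u v hc c.out))).choose_spec.1).trans (Quotient.out_eq c)

lemma Rmap_col (d : Quotient (orbS u)) : cls u (Rmap u v hc d) = d := by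
  unfold Rmap
  split_ifs with h
  · exact ((grid u v hc ((jointS u v hc).iseqv.trans
      ((jointS u v hc).iseqv.symm (orPt_rel u v hc (base u v hc d.out)))
      (ocPt_rel u v hc (base u v hc d.out)))).choose_spec.2).trans h.1.symm
  · exact ((grid u v hc (base_rel u v hc d.out)).choose_spec.2).trans (Quotient.out_eq d)

lemma Lmap_spec (c : Quotient (orbS v)) :
    (cls v (base u v hc c.out) = c ∧ hasOC u v hc (base u v hc c.out) ∧
      cls u (Lmap u v hc c) = cls u (ocPt u v hc (base u v hc c.out))) ∨
    (¬(cls v (base u v hc c.out) = c ∧ hasOC u v hc (base u v hc c.out)) ∧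
      cls u (Lmap u v hc c) = cls u (base u v hc c.out)) := by
  unfold Lmap
  split_ifs with h
  · exact Or.inl ⟨h.1, h.2,
      (grid u v hc (ocPt_rel u v hc (base u v hc c.out))).choose_spec.2⟩
  · exact Or.inr ⟨h, (grid u v hc ((jointS u v hc).iseqv.symm
      (base_rel u v hc c.out))).choose_spec.2⟩

lemma Rmap_spec (d : Quotient (orbS u)) :
    (d = cls u (ocPt u v hc (base u v hc d.out)) ∧ hasOR u v hc (base u v hc d.out) ∧
      cls v (Rmap u v hc d) = cls v (orPt u v hc (base u v hc d.out))) ∨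
    (¬(d = cls u (ocPt u v hc (base u v hc d.out)) ∧ hasOR u v hc (base u v hc d.out)) ∧
      cls v (Rmap u v hc d) = cls v (base u v hc d.out)) := by
  unfold Rmap
  split_ifs with h
  · exact Or.inl ⟨h.1, h.2, (grid u v hc ((jointS u v hc).iseqv.trans
      ((jointS u v hc).iseqv.symm (orPt_rel u v hc (base u v hc d.out)))
      (ocPt_rel u v hc (base u v hc d.out)))).choose_spec.1⟩
  · exact Or.inr ⟨h, (grid u v hc (base_rel u v hc d.out)).choose_spec.1⟩

lemma hasOR_of_mem {c : Quotient (orbS v)} (hm : ∃ k, permQuot u v hc k c ≠ c) :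
    hasOR u v hc (base u v hc c.out) := by
  obtain ⟨k, hk⟩ := hm
  have hx : cls v c.out = c := Quotient.out_eq c
  have h1 : cls v (u k c.out) ≠ cls v c.out := by
    intro he
    apply hk
    rw [← hx, permQuot_apply_mk]
    exact he
  by_cases h2 : cls v c.out = cls v (base u v hc c.out)
  · refine ⟨u k c.out, ?_, ?_⟩
    · exact (jointS u v hc).iseqv.trans (base_rel u v hc c.out)
        (orbS_le_jointS_left u v hc (⟨k, rfl⟩ : (orbS u).r c.out (u k c.out)))
    · rw [← h2]; exact h1
  · exact ⟨c.out, base_rel u v hc c.out, fun he => h2 he⟩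

lemma hasOC_of_mem (hc' : ∀ l k, v l * u k = u k * v l)
    {d : Quotient (orbS u)} (hm : ∃ l, permQuot v u hc' l d ≠ d) :
    hasOC u v hc (base u v hc d.out) := by
  obtain ⟨l, hl⟩ := hm
  have hx : cls u d.out = d := Quotient.out_eq d
  have h1 : cls u (v l d.out) ≠ cls u d.out := by
    intro he
    apply hl
    rw [← hx, permQuot_apply_mk]
    exact he
  by_cases h2 : cls u d.out = cls u (base u v hc d.out)
  · refine ⟨v l d.out, ?_, ?_⟩
    · exact (jointS u v hc).iseqv.trans (base_rel u v hc d.out)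
        (orbS_le_jointS_right u v hc (⟨l, rfl⟩ : (orbS v).r d.out (v l d.out)))
    · rw [← h2]; exact h1
  · exact ⟨d.out, base_rel u v hc d.out, fun he => h2 he⟩

lemma L_ne_R (hc' : ∀ l k, v l * u k = u k * v l)
    {c : Quotient (orbS v)} {d : Quotient (orbS u)}
    (hcm : ∃ k, permQuot u v hc k c ≠ c) (hdm : ∃ l, permQuot v u hc' l d ≠ d) :
    Lmap u v hc c ≠ Rmap u v hc d := by
  intro he
  have hrow : cls v (Lmap u v hc c) = c := Lmap_row u v hc c
  have hcol : cls u (Lmap u v hc c) = d := by rw [he]; exact Rmap_col u v hc d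
  have hbc : base u v hc c.out = base u v hc (Lmap u v hc c) := by
    apply base_eq
    apply orbS_le_jointS_right u v hc
    exact Quotient.exact ((Quotient.out_eq c).trans hrow.symm)
  have hbd : base u v hc d.out = base u v hc (Lmap u v hc c) := by
    apply base_eq
    apply orbS_le_jointS_left u v hc
    exact Quotient.exact ((Quotient.out_eq d).trans hcol.symm)
  have hOR : hasOR u v hc (base u v hc (Lmap u v hc c)) := hbc ▸ hasOR_of_mem u v hc hcm
  have hOC : hasOC u v hc (base u v hc (Lmap u v hc c)) :=
    hbd ▸ hasOC_of_mem u v hc hc' hdm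
  have hLs := Lmap_spec u v hc c
  rw [hbc] at hLs
  have hRs := Rmap_spec u v hc d
  rw [hbd, ← he] at hRs
  rcases hLs with ⟨hL1, hL2, hL3⟩ | ⟨hL1, hL2⟩ <;>
    rcases hRs with ⟨hR1, hR2, hR3⟩ | ⟨hR1, hR2⟩
  · exact orPt_row u v hc hR2 (hR3.symm.trans (hrow.trans hL1.symm))
  · exact hR1 ⟨hcol.symm.trans hL3, hOR⟩
  · exact ocPt_col u v hc hOC (hR1.symm.trans (hcol.symm.trans hL2))
  · exact hL1 ⟨hR2.symm.trans hrow, hOC⟩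

lemma counting [Finite α] (hc' : ∀ l k, v l * u k = u k * v l) :
    Nat.card {c : Quotient (orbS v) // ∃ k, permQuot u v hc k c ≠ c}
      + Nat.card {d : Quotient (orbS u) // ∃ l, permQuot v u hc' l d ≠ d}
      ≤ Nat.card α := by
  classical
  set SG := {c : Quotient (orbS v) // ∃ k, permQuot u v hc k c ≠ c}
  set SH := {d : Quotient (orbS u) // ∃ l, permQuot v u hc' l d ≠ d}
  let J : SG ⊕ SH → α := Sum.elim (fun c => Lmap u v hc c.1) (fun d => Rmap u v hc d.1)
  have hinj : Function.Injective J := by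
    rintro (a | a) (b | b) hab
    · have hab' : Lmap u v hc a.1 = Lmap u v hc b.1 := hab
      have : a.1 = b.1 := by
        rw [← Lmap_row u v hc a.1, ← Lmap_row u v hc b.1, hab']
      exact congrArg Sum.inl (Subtype.ext this)
    · exact absurd hab (L_ne_R u v hc hc' a.2 b.2)
    · exact absurd hab.symm (L_ne_R u v hc hc' b.2 a.2)
    · have hab' : Rmap u v hc a.1 = Rmap u v hc b.1 := hab
      have : a.1 = b.1 := by
        rw [← Rmap_col u v hc a.1, ← Rmap_col u v hc b.1, hab']
      exact congrArg Sum.inr (Subtype.ext this)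
  calc Nat.card SG + Nat.card SH = Nat.card (SG ⊕ SH) := (Nat.card_sum).symm
    _ ≤ Nat.card α := Nat.card_le_card_of_injective J hinj

end Two

end MuProdAux

open MuProdAux in
theorem mu_prod_of_coprime (G H : Type*) [Group G] [Group H] [Finite G] [Finite H]
    (hcop : Nat.Coprime (Nat.card G) (Nat.card H)) :
    minFaithfulDegree (G × H) = minFaithfulDegree G + minFaithfulDegree H := by
  apply le_antisymm
  · -- upper bound
    obtain ⟨fG, hfG⟩ : ∃ f : G →* Equiv.Perm (Fin (minFaithfulDegree G)),
        Function.Injective f := Nat.sInf_mem (exists_embed G)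
    obtain ⟨fH, hfH⟩ : ∃ f : H →* Equiv.Perm (Fin (minFaithfulDegree H)),
        Function.Injective f := Nat.sInf_mem (exists_embed H)
    apply Nat.sInf_le
    refine ⟨(permCongrHom finSumFinEquiv).comp
      ((Equiv.Perm.sumCongrHom _ _).comp (fG.prodMap fH)), ?_⟩
    refine (permCongrHom_injective _).comp (Equiv.Perm.sumCongrHom_injective.comp ?_)
    rw [MonoidHom.coe_prodMap]
    exact hfG.prodMap hfH
  · -- lower bound
    obtain ⟨F, hF⟩ : ∃ f : G × H →* Equiv.Perm (Fin (minFaithfulDegree (G × H))),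
        Function.Injective f := Nat.sInf_mem (exists_embed (G × H))
    have hc : ∀ g h, (F.comp (MonoidHom.inl G H)) g * (F.comp (MonoidHom.inr G H)) h
        = (F.comp (MonoidHom.inr G H)) h * (F.comp (MonoidHom.inl G H)) g := by
      intro g h
      show F (g, 1) * F (1, h) = F (1, h) * F (g, 1)
      rw [← map_mul, ← map_mul, Prod.mk_mul_mk, Prod.mk_mul_mk]
      simp
    have hc' : ∀ h g, (F.comp (MonoidHom.inr G H)) h * (F.comp (MonoidHom.inl G H)) g
        = (F.comp (MonoidHom.inl G H)) g * (F.comp (MonoidHom.inr G H)) h :=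
      fun h g => (hc g h).symm
    have hu : Function.Injective (F.comp (MonoidHom.inl G H)) := by
      intro a b hab
      have hab2 : F (a, 1) = F (b, 1) := hab
      have h2 : ((a, 1) : G × H) = (b, 1) := hF hab2
      exact ((Prod.mk.injEq _ _ _ _).mp h2).1
    have hv : Function.Injective (F.comp (MonoidHom.inr G H)) := by
      intro a b hab
      have hab2 : F (1, a) = F (1, b) := hab
      have h2 : ((1, a) : G × H) = (1, b) := hF hab2
      exact ((Prod.mk.injEq _ _ _ _).mp h2).2
    have h1 : minFaithfulDegree G ≤ Nat.card {c : Quotient (orbS (F.comp (MonoidHom.inr G H))) //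
        ∃ k, permQuot (F.comp (MonoidHom.inl G H)) (F.comp (MonoidHom.inr G H)) hc k c ≠ c} :=
      mu_le_card_support _ (permQuot_injective _ _ hc hcop hu)
    have h2 : minFaithfulDegree H ≤ Nat.card {d : Quotient (orbS (F.comp (MonoidHom.inl G H))) //
        ∃ l, permQuot (F.comp (MonoidHom.inr G H)) (F.comp (MonoidHom.inl G H)) hc' l d ≠ d} :=
      mu_le_card_support _ (permQuot_injective _ _ hc' hcop.symm hv)
    have h3 := counting (F.comp (MonoidHom.inl G H)) (F.comp (MonoidHom.inr G H)) hc hc'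
    have h4 : Nat.card (Fin (minFaithfulDegree (G × H))) = minFaithfulDegree (G × H) := by simp
    omega
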